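/- Let L and R be languages over an alphabet Σ such that L * R ⊆ Palindromes, L contains at least two distinct words, and R is infinite (as a set of words). Then there exist a finite index set J and, for each j ∈ J, words u_{j,0}, u_{j,1}, u_{j,2}, u_{j,3} such that L * R ⊆ ⋃_{j∈J} {u_{j,0}} * ({u_{j,1}})* * ({u_{j,2}})* * {u_{j,3}}, where * between languages is the product and K* denotes the Kleene star of K. -/

import Mathlib

/-- The language of palindromes over an alphabet `α`. -/
def Palindromes {α : Type*} : Language α := {w | w.reverse = w}

namespace Stmt3Aux

variable {α : Type*}

/-- power of a word -/
def pw (z : List α) : ℕ → List α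
  | 0 => []
  | n+1 => z ++ pw z n

lemma pw_succ (z : List α) (n : ℕ) : pw z (n+1) = z ++ pw z n := rfl

lemma pw_append_self (z : List α) (n : ℕ) : pw z n ++ z = z ++ pw z n := by
  induction n with
  | zero => simp [pw]
  | succ n ih => simp only [pw, List.append_assoc, ih]

lemma pw_succ' (z : List α) (n : ℕ) : pw z (n+1) = pw z n ++ z := by
  rw [pw_append_self]; rfl

lemma pw_reverse (z : List α) (n : ℕ) : (pw z n).reverse = pw z.reverse n := by
  induction n with
  | zero => simp [pw]
  | succ n ih => rw [pw_succ, List.reverse_append, ih, pw_append_self]; rfl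

lemma pw_length (z : List α) (n : ℕ) : (pw z n).length = n * z.length := by
  induction n with
  | zero => simp [pw]
  | succ n ih => simp [pw, ih, Nat.succ_mul, Nat.add_comm]

lemma pw_mem_kstar (z : List α) (n : ℕ) : pw z n ∈ KStar.kstar ({z} : Language α) := by
  refine Language.mem_kstar.2 ⟨List.replicate n z, ?_, ?_⟩
  · induction n with
    | zero => simp [pw]
    | succ n ih => simp [pw, List.replicate_succ, ih]
  · intro y hy
    simp only [List.mem_replicate] at hy
    rw [hy.2]; exact rfl

/-- prefix of the infinite word given by `f` -/
def pre (f : ℕ → α) (n : ℕ) : List α := (List.range n).map f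

/-- segment `[a, b)` of the infinite word given by `f` -/
def seg (f : ℕ → α) (a b : ℕ) : List α := (List.range (b - a)).map (fun k => f (a + k))

/-- `d` is a period of `f` -/
def Pd (f : ℕ → α) (d : ℕ) : Prop := ∀ i, f (i + d) = f i

lemma pre_length (f : ℕ → α) (n : ℕ) : (pre f n).length = n := by simp [pre]

lemma seg_length (f : ℕ → α) (a b : ℕ) : (seg f a b).length = b - a := by simp [seg]

lemma pre_take (f : ℕ → α) {m n : ℕ} (h : m ≤ n) : (pre f n).take m = pre f m := by
  simp [pre, ← List.map_take, List.take_range, Nat.min_eq_left h]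

lemma seg_zero (f : ℕ → α) (b : ℕ) : seg f 0 b = pre f b := by simp [seg, pre]

lemma pre_append_seg (f : ℕ → α) {a b : ℕ} (h : a ≤ b) :
    pre f b = pre f a ++ seg f a b := by
  have : b = a + (b - a) := by omega
  rw [this, pre, List.range_add, List.map_append, List.map_map]
  have h2 : a + (b - a) - a = b - a := by omega
  simp [seg, pre, h2, Function.comp]

lemma pre_drop (f : ℕ → α) {a b : ℕ} (h : a ≤ b) : (pre f b).drop a = seg f a b := by
  rw [pre_append_seg f h, List.drop_left' (pre_length f a)]

lemma seg_append (f : ℕ → α) {a b c : ℕ} (hab : a ≤ b) (hbc : b ≤ c) :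
    seg f a b ++ seg f b c = seg f a c := by
  apply List.append_cancel_left (as := pre f a)
  rw [← List.append_assoc, ← pre_append_seg f hab, ← pre_append_seg f hbc,
    ← pre_append_seg f (hab.trans hbc)]

lemma seg_shift (f : ℕ → α) {d : ℕ} (hd : Pd f d) (a b : ℕ) :
    seg f (a + d) (b + d) = seg f a b := by
  simp only [seg, Nat.add_sub_add_right]
  apply List.map_eq_map_iff.2
  intro k _
  have : a + d + k = a + k + d := by omega
  rw [this, hd]

lemma seg_shift_mul (f : ℕ → α) {d : ℕ} (hd : Pd f d) (j a b : ℕ) :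
    seg f (a + d * j) (b + d * j) = seg f a b := by
  induction j with
  | zero => simp
  | succ j ih =>
    have h1 : a + d * (j + 1) = (a + d * j) + d := by ring
    have h2 : b + d * (j + 1) = (b + d * j) + d := by ring
    rw [h1, h2, seg_shift f hd, ih]

lemma pre_shift (f : ℕ → α) {d : ℕ} (hd : Pd f d) (c : ℕ) :
    pre f (d + c) = pre f d ++ pre f c := by
  rw [pre_append_seg f (by omega : d ≤ d + c)]
  congr 1
  have h := seg_shift f hd 0 c
  rw [zero_add, seg_zero] at h
  rw [← h]
  congr 1
  omega

lemma pd_mul (f : ℕ → α) {d : ℕ} (hd : Pd f d) (k : ℕ) : Pd f (d * k) := by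
  induction k with
  | zero => intro i; simp
  | succ k ih =>
    intro i
    have : i + d * (k + 1) = (i + d * k) + d := by ring
    rw [this, hd, ih]

lemma pd_sub (f : ℕ → α) {a b : ℕ} (ha : Pd f a) (hb : Pd f b) (hab : a ≤ b) :
    Pd f (b - a) := by
  intro i
  have h1 : f (i + (b - a) + a) = f (i + (b - a)) := ha _
  have h2 : i + (b - a) + a = i + b := by omega
  rw [h2] at h1
  rw [← h1, hb]

lemma pd_gcd (f : ℕ → α) : ∀ {a b : ℕ}, Pd f a → Pd f b → Pd f (Nat.gcd a b) := by
  intro a b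
  induction a, b using Nat.gcd.induction with
  | H0 b => intro _ hb; simpa using hb
  | H1 a b hpos ih =>
    intro ha hb
    rw [Nat.gcd_rec]
    apply ih _ ha
    have : b % a = b - a * (b / a) := by
      have := Nat.div_add_mod b a; omega
    rw [this]
    exact pd_sub f (pd_mul f ha _) hb (Nat.mul_div_le b a)

lemma pd_of_prefix_period (f : ℕ → α) {p d m : ℕ} (hp : Pd f p) (hppos : 0 < p)
    (h : ∀ i, i + d < m → f (i + d) = f i) (hm : p + d ≤ m) : Pd f d := by
  intro i
  have hmod : i % p + p * (i / p) = i := Nat.mod_add_div i p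
  have hrep : ∀ j, f (j + p * (i / p)) = f j := pd_mul f hp (i / p)
  have h1 : f (i + d) = f (i % p + d) := by
    have : i + d = (i % p + d) + p * (i / p) := by omega
    rw [this, hrep]
  have h2 : i % p + d < m := by
    have := Nat.mod_lt i hppos; omega
  have h3 : f i = f (i % p) := by
    conv_lhs => rw [← hmod]
    rw [hrep]
  rw [h1, h _ h2]
  exact h3.symm


/-- palindromic prefix of a palindrome gives a prefix-period -/
lemma pal_pre_period (f : ℕ → α) {m m' : ℕ} (hm : (pre f m).reverse = pre f m)
    (hm' : (pre f m').reverse = pre f m') (hlt : m < m') :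
    ∀ i, i + (m' - m) < m' → f (i + (m' - m)) = f i := by
  set d := m' - m with hd
  have hdrop : (pre f m').drop d = pre f m := by
    have h1 : ((pre f m').drop d).reverse = (pre f m').reverse.take (m' - d) := by
      rw [List.reverse_drop, pre_length]
    rw [hm'] at h1
    have h2 : m' - d = m := by omega
    rw [h2, pre_take f hlt.le] at h1
    have := congrArg List.reverse h1
    rwa [List.reverse_reverse, hm] at this
  have hseg : seg f d m' = pre f m := by
    rw [← pre_drop f (by omega : d ≤ m'), hdrop]
  have hpt : ∀ k, k < m → f (d + k) = f k := by
    intro k hk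
    have h3 : m' - d = m := by omega
    have := hseg
    rw [seg, pre, h3] at this
    have h4 := List.map_eq_map_iff.1 this k (List.mem_range.2 hk)
    exact h4
  intro i hi
  rw [Nat.add_comm]
  exact hpt i (by omega)

/-- two long palindromic prefixes of an eventually periodic word differ by a
multiple of the minimal period -/
lemma pal_pre_dvd (f : ℕ → α) {p m m' : ℕ} (hp : Pd f p) (hppos : 0 < p)
    (hmin : ∀ d, 0 < d → Pd f d → p ≤ d)
    (hm : (pre f m).reverse = pre f m) (hm' : (pre f m').reverse = pre f m')
    (hpm : p ≤ m) (hlt : m < m') : p ∣ (m' - m) := by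
  set d := m' - m with hd
  have hdpos : 0 < d := by omega
  have hpp := pal_pre_period f hm hm' hlt
  have hpd : Pd f d := pd_of_prefix_period f hp hppos hpp (by omega)
  have hg : Pd f (Nat.gcd p d) := pd_gcd f hp hpd
  have hgpos : 0 < Nat.gcd p d := Nat.gcd_pos_of_pos_left d hppos
  have hge : p ≤ Nat.gcd p d := hmin _ hgpos hg
  have hle : Nat.gcd p d ∣ p := Nat.gcd_dvd_left p d
  have hgle : Nat.gcd p d ≤ p := Nat.le_of_dvd hppos hle
  have : Nat.gcd p d = p := by omega
  rw [← this]
  exact Nat.gcd_dvd_right p d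

/-- palindrome with prefix `t`: `t` is a prefix of the reverse -/
lemma take_of_pal {t w : List α} (h : (t ++ w).reverse = t ++ w)
    (hle : t.length ≤ w.length) : t = w.reverse.take t.length := by
  have h2 : w.reverse ++ t.reverse = t ++ w := by
    rw [← List.reverse_append]; exact h
  have h3 := congrArg (List.take t.length) h2
  rw [List.take_append, List.take_append] at h3
  have h4 : t.length - w.reverse.length = 0 := by simp; omega
  have h5 : t.length - t.length = 0 := by omega
  rw [h4, h5] at h3
  simpa using h3.symm

/-- palindrome with suffix `w`: reverse of `w` is a prefix -/
lemma rev_take_of_pal {t w : List α} (h : (t ++ w).reverse = t ++ w)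
    (hle : w.length ≤ t.length) : w.reverse = t.take w.length := by
  have h2 : w.reverse ++ t.reverse = t ++ w := by
    rw [← List.reverse_append]; exact h
  have h3 := congrArg (List.take w.length) h2
  rw [List.take_append, List.take_append] at h3
  have h4 : w.length - w.reverse.length = 0 := by simp
  have h5 : w.length - t.length = 0 := by omega
  rw [h4, h5] at h3
  simp only [List.take_zero, List.append_nil] at h3
  rw [← h3, List.take_of_length_le (by simp)]


lemma pre_mul_add (f : ℕ → α) {p : ℕ} (hp : Pd f p) (k c : ℕ) :
    pre f (p * k + c) = pw (pre f p) k ++ pre f c := by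
  induction k with
  | zero => simp [pw]
  | succ k ih =>
    have h1 : p * (k + 1) + c = p + (p * k + c) := by ring
    rw [h1, pre_shift f hp, ih, pw_succ, List.append_assoc]

lemma pw_add (z : List α) (a b : ℕ) : pw z (a + b) = pw z a ++ pw z b := by
  induction a with
  | zero => simp [pw]
  | succ a ih =>
    have : a + 1 + b = (a + b) + 1 := by omega
    rw [this, pw_succ, pw_succ, ih, List.append_assoc]

lemma take_app {l₁ l₂ : List α} {c : ℕ} (h : c ≤ l₁.length) :
    (l₁ ++ l₂).take c = l₁.take c := by
  rw [List.take_append, Nat.sub_eq_zero_of_le h, List.take_zero, List.append_nil]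

lemma take_pw_append (z w : List α) {k c : ℕ} (hk : 1 ≤ k) (hc : c ≤ z.length) :
    (pw z k ++ w).take c = z.take c := by
  cases k with
  | zero => omega
  | succ k =>
    rw [pw_succ, List.append_assoc]
    exact take_app hc

def quad (u0 u1 u2 u3 : List α) : Fin 4 → List α
  | 0 => u0
  | 1 => u1
  | 2 => u2
  | 3 => u3

def quadLang (q : Fin 4 → List α) : Language α :=
  ({q 0} : Language α) * KStar.kstar ({q 1} : Language α) *
    KStar.kstar ({q 2} : Language α) * ({q 3} : Language α)

lemma mem_quadLang (u0 u1 u2 u3 : List α) (m n : ℕ) :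
    u0 ++ (pw u1 m ++ (pw u2 n ++ u3)) ∈ quadLang (quad u0 u1 u2 u3) := by
  have h0 : (quad u0 u1 u2 u3) 0 = u0 := rfl
  have h1 : (quad u0 u1 u2 u3) 1 = u1 := rfl
  have h2 : (quad u0 u1 u2 u3) 2 = u2 := rfl
  have h3 : (quad u0 u1 u2 u3) 3 = u3 := rfl
  unfold quadLang
  rw [h0, h1, h2, h3]
  refine Language.mem_mul.2 ⟨u0 ++ pw u1 m ++ pw u2 n, ?_, u3, rfl, by
    simp [List.append_assoc]⟩
  refine Language.mem_mul.2 ⟨u0 ++ pw u1 m, ?_, pw u2 n, pw_mem_kstar _ _, rfl⟩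
  exact Language.mem_mul.2 ⟨u0, rfl, pw u1 m, pw_mem_kstar _ _, rfl⟩



theorem main (L R : Language α)
    (hsub : L * R ≤ Palindromes)
    (hR : Set.Infinite (R : Set (List α)))
    {x y : List α} (hx : x ∈ L) (hy : y ∈ L) (hlt : x.length < y.length) :
    ∃ (k : ℕ) (u : Fin k → Fin 4 → List α),
      L * R ≤ ⨆ j : Fin k,
        ({u j 0} : Language α) * KStar.kstar ({u j 1} : Language α) *
          KStar.kstar ({u j 2} : Language α) * ({u j 3} : Language α) := by
  classical
  have hpal : ∀ t ∈ L, ∀ w ∈ R, (t ++ w).reverse = t ++ w := fun t ht w hw =>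
    hsub (Language.mem_mul.2 ⟨t, ht, w, hw, rfl⟩)
  -- step 1 : a word in R longer than y
  have hdetshort : ∀ t ∈ L, ∀ w ∈ R, w.length ≤ t.length → w = (t.take w.length).reverse := by
    intro t ht w hw hle
    have h := rev_take_of_pal (hpal t ht w hw) hle
    rw [← h, List.reverse_reverse]
  have exists_longer : ∀ t ∈ L, ∃ w ∈ R, t.length < w.length := by
    intro t ht
    by_contra hcon
    push_neg at hcon
    apply hR
    apply Set.Finite.subset ((Set.finite_Iio (t.length + 1)).image (fun n => (t.take n).reverse))
    intro w hw
    exact ⟨w.length, by simp only [Set.mem_Iio]; exact Nat.lt_succ_of_le (hcon w hw),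
      (hdetshort t ht w hw (hcon w hw)).symm⟩
  obtain ⟨w₀, hw₀R, hw₀len⟩ := exists_longer y hy
  have hxw₀ : x = w₀.reverse.take x.length := take_of_pal (hpal x hx w₀ hw₀R) (by omega)
  have hyw₀ : y = w₀.reverse.take y.length := take_of_pal (hpal y hy w₀ hw₀R) (by omega)
  set z₀ := y.drop x.length with hz₀def
  have hxy : x = y.take x.length := by
    rw [hyw₀, List.take_take, Nat.min_eq_left hlt.le]
    exact hxw₀
  have hyz : y = x ++ z₀ := by
    conv_lhs => rw [← List.take_append_drop x.length y]
    rw [← hxy]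
  have hz₀pos : 0 < z₀.length := by
    have := congrArg List.length hyz
    simp at this; omega
  -- step 2 : the infinite word
  set d₀ := z₀.length with hd₀
  set f : ℕ → α := fun i => z₀.get ⟨i % d₀, Nat.mod_lt _ hz₀pos⟩ with hfdef
  have hfd₀ : Pd f d₀ := by
    intro i
    simp only [hfdef]
    congr 1
    simp [Nat.add_mod_right]
  have hfz₀ : pre f d₀ = z₀ := by
    apply List.ext_getElem (by simp [pre]; exact hd₀)
    intro i h1 h2
    simp only [pre, List.getElem_map, List.getElem_range, hfdef]
    rw [List.get_eq_getElem]
    congr 1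
    exact Nat.mod_eq_of_lt h2
  -- step 3 : key induction
  have W4 : ∀ n (m : List α), m.length ≤ n → z₀ ++ m = m ++ z₀.reverse →
      m = pre f m.length := by
    intro n
    induction n with
    | zero =>
      intro m hm _
      have : m = [] := List.eq_nil_of_length_eq_zero (by omega)
      simp [this, pre]
    | succ n ih =>
      intro m hm he
      rcases le_or_gt m.length d₀ with h1 | h1
      · have h2 := congrArg (List.take m.length) he.symm
        rw [List.take_append, List.take_append,
          List.take_of_length_le (le_refl m.length), Nat.sub_self, List.take_zero,
          List.append_nil] at h2
        have h3 : m.length - d₀ = 0 := by omega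
        rw [h3, List.take_zero, List.append_nil] at h2
        exact h2.trans (by rw [← hfz₀]; exact pre_take f h1)
      · have h2 := congrArg (List.take d₀) he
        rw [List.take_append, List.take_append,
          List.take_of_length_le (le_refl d₀), Nat.sub_self, List.take_zero,
          List.append_nil] at h2
        have h3 : d₀ - m.length = 0 := by omega
        rw [h3, List.take_zero, List.append_nil] at h2
        set m₁ := m.drop d₀ with hm₁def
        have hm₁ : m = z₀ ++ m₁ := by
          conv_lhs => rw [← List.take_append_drop d₀ m, ← h2]
        have he2 : z₀ ++ m₁ = m₁ ++ z₀.reverse := by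
          have h4 := he
          rw [hm₁, List.append_assoc] at h4
          exact List.append_cancel_left h4
        have hlen₁ : m₁.length ≤ n := by
          simp only [hm₁def, List.length_drop]; omega
        have h5 := ih m₁ hlen₁ he2
        have hlen : m.length = d₀ + m₁.length := by
          have h6 := congrArg List.length hm₁
          simp only [List.length_append] at h6
          omega
        calc m = z₀ ++ m₁ := hm₁
        _ = pre f d₀ ++ pre f m₁.length := by rw [hfz₀, ← h5]
        _ = pre f (d₀ + m₁.length) := (pre_shift f hfd₀ _).symm
        _ = pre f m.length := by rw [hlen]
  -- step 4 : prefix function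
  set Pre : ℕ → List α := fun n => x.take n ++ pre f (n - x.length) with hPre
  have PreLen : ∀ n, (Pre n).length = n → True := fun _ _ => trivial
  have PreTake : ∀ {m n : ℕ}, m ≤ n → (Pre n).take m = Pre m := by
    intro m n hmn
    simp only [hPre]
    rcases le_or_gt m x.length with h1 | h1
    · rw [List.take_append]
      have h2 : m - (x.take n).length = 0 := by
        simp only [List.length_take]; omega
      rw [h2, List.take_zero, List.append_nil, List.take_take, Nat.min_eq_left hmn]
      have h3 : m - x.length = 0 := by omega
      rw [h3]
      simp [pre]
    · have hxn : x.length ≤ n := by omega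
      rw [List.take_of_length_le hxn, List.take_of_length_le h1.le,
        List.take_append, List.take_of_length_le (by omega),
        pre_take f (by omega)]
  -- step 5 : structure of R
  have F2 : ∀ w ∈ R, w.reverse = Pre w.length := by
    intro w hw
    rcases le_or_gt w.length x.length with hle | hlt'
    · have h := rev_take_of_pal (hpal x hx w hw) hle
      simp only [hPre]
      have h3 : w.length - x.length = 0 := by omega
      rw [h3]
      simp [pre, h]
    · have hxw : x = w.reverse.take x.length := take_of_pal (hpal x hx w hw) hlt'.le
      set m := w.reverse.drop x.length with hmdef
      have hwrev : w.reverse = x ++ m := by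
        conv_lhs => rw [← List.take_append_drop x.length w.reverse, ← hxw]
      have hw' : w = m.reverse ++ x.reverse := by
        rw [← List.reverse_reverse w, hwrev, List.reverse_append]
      have hmpal : m.reverse = m := by
        have hp := hpal x hx w hw
        rw [hw'] at hp
        simp only [List.reverse_append, List.reverse_reverse, List.append_assoc] at hp
        exact (List.append_cancel_right (List.append_cancel_left hp)).symm
      have hzm : z₀ ++ m = m ++ z₀.reverse := by
        have hp2 := hpal y hy w hw
        rw [hyz, hw'] at hp2
        simp only [List.reverse_append, List.reverse_reverse, List.append_assoc] at hp2
        replace hp2 := List.append_cancel_left hp2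
        rw [hmpal, ← List.append_assoc, ← List.append_assoc] at hp2
        exact (List.append_cancel_right hp2).symm
      have h7 := W4 m.length m le_rfl hzm
      have hmlen : m.length = w.length - x.length := by
        simp only [hmdef, List.length_drop, List.length_reverse]
      rw [hwrev, h7, hmlen]
      simp only [hPre]
      rw [List.take_of_length_le hlt'.le]
  -- step 6 : unboundedness and structure of L
  have exists_big : ∀ N, ∃ w ∈ R, N ≤ w.length := by
    intro N
    by_contra hcon
    push_neg at hcon
    apply hR
    apply Set.Finite.subset ((Set.finite_Iio N).image (fun n => (Pre n).reverse))
    intro w hw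
    exact ⟨w.length, hcon w hw, by
      show (Pre w.length).reverse = w
      rw [← F2 w hw, List.reverse_reverse]⟩
  have F1 : ∀ t ∈ L, t = Pre t.length := by
    intro t ht
    obtain ⟨w, hw, hwlen⟩ := exists_big t.length
    calc t = w.reverse.take t.length := take_of_pal (hpal t ht w hw) hwlen
    _ = (Pre w.length).take t.length := by rw [F2 w hw]
    _ = Pre t.length := PreTake hwlen
  -- step 7 : palindromic segments
  have PF2 : ∀ t ∈ L, ∀ w ∈ R, x.length ≤ t.length → t.length ≤ w.length →
      (seg f (t.length - x.length) (w.length - x.length)).reverse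
        = seg f (t.length - x.length) (w.length - x.length) := by
    intro t ht w hw h1 h2
    set a := t.length - x.length with hadef
    set n := w.length - x.length with hndef
    have han : a ≤ n := by omega
    have hteq : t = x ++ pre f a := by
      calc t = Pre t.length := F1 t ht
      _ = x ++ pre f a := by simp only [hPre]; rw [List.take_of_length_le h1]
    have hweq : w = (pre f n).reverse ++ x.reverse := by
      have h3 : w = (Pre w.length).reverse := by rw [← F2 w hw, List.reverse_reverse]
      calc w = (Pre w.length).reverse := h3
      _ = (pre f n).reverse ++ x.reverse := by
        simp only [hPre]
        rw [List.take_of_length_le (by omega), List.reverse_append]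
    have hsplit : pre f n = pre f a ++ seg f a n := pre_append_seg f han
    have hp := hpal t ht w hw
    rw [hteq, hweq, hsplit] at hp
    simp only [List.reverse_append, List.reverse_reverse, List.append_assoc] at hp
    replace hp := List.append_cancel_left (List.append_cancel_left hp)
    rw [← List.append_assoc, ← List.append_assoc] at hp
    exact (List.append_cancel_right (List.append_cancel_right hp)).symm
  have PF1 : ∀ w ∈ R, x.length ≤ w.length →
      (pre f (w.length - x.length)).reverse = pre f (w.length - x.length) := by
    intro w hw hle
    have h := PF2 x hx w hw le_rfl hle
    rw [Nat.sub_self, seg_zero f] at h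
    exact h
  -- step 8 : minimal period
  have hper : ∃ d, 0 < d ∧ Pd f d := ⟨d₀, hz₀pos, hfd₀⟩
  set p := Nat.find hper with hpdef
  have hppos : 0 < p := (Nat.find_spec hper).1
  have hfp : Pd f p := (Nat.find_spec hper).2
  have hminp : ∀ d, 0 < d → Pd f d → p ≤ d := fun d h1 h2 => Nat.find_min' hper ⟨h1, h2⟩
  set z := pre f p with hzdef
  have hzlen : z.length = p := pre_length f p
  obtain ⟨w₁, hw₁R, hw₁len⟩ := exists_big (x.length + p)
  set n₁ := w₁.length - x.length with hn₁def
  have hn₁p : p ≤ n₁ := by omega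
  set r := n₁ % p with hrdef
  have hrp : r < p := by rw [hrdef]; exact Nat.mod_lt _ hppos
  set τ := pre f r with hτdef
  have hτlen : τ.length = r := pre_length f r
  have hpal₁ : (pre f n₁).reverse = pre f n₁ := PF1 w₁ hw₁R (by omega)
  have hresid : ∀ n, (pre f n).reverse = pre f n → p ≤ n → n % p = r := by
    intro n hpaln hpn
    obtain ⟨w', hw', hw'len⟩ := exists_big (x.length + n + n₁ + 1)
    set n' := w'.length - x.length with hn'def
    have hn'1 : n < n' := by omega
    have hn'2 : n₁ < n' := by omega
    have hpaln' := PF1 w' hw' (by omega)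
    have d1 : p ∣ n' - n := pal_pre_dvd f hfp hppos hminp hpaln hpaln' hpn hn'1
    have d2 : p ∣ n' - n₁ := pal_pre_dvd f hfp hppos hminp hpal₁ hpaln' hn₁p hn'2
    have e1 : n % p = n' % p := (Nat.modEq_iff_dvd' hn'1.le).2 d1
    have e2 : n₁ % p = n' % p := (Nat.modEq_iff_dvd' hn'2.le).2 d2
    omega
  -- step 9 : palindromic decomposition of z
  have hsum₁ : p * (n₁ / p) + r = n₁ := by
    have := Nat.div_add_mod n₁ p; omega
  have hk₁ : 1 ≤ n₁ / p := (Nat.one_le_div_iff hppos).2 hn₁p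
  have hn₁eq : pre f n₁ = pw z (n₁ / p) ++ τ := by
    conv_lhs => rw [← hsum₁]
    rw [pre_mul_add f hfp, ← hzdef, ← hτdef]
  have hpalzk : (pw z (n₁ / p) ++ τ).reverse = pw z (n₁ / p) ++ τ := by
    rw [← hn₁eq]; exact hpal₁
  have hpwlen : ∀ k, (pw z k).length = k * p := fun k => by rw [pw_length, hzlen]
  have hτrev : τ.reverse = τ := by
    have h3 := congrArg (List.take r) hpalzk
    rw [List.reverse_append, pw_reverse] at h3
    rw [take_app (by simp [hτlen]), take_pw_append z τ hk₁ (by omega)] at h3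
    rw [List.take_of_length_le (by simp [hτlen])] at h3
    rw [h3, hzdef, pre_take f hrp.le]
  have hδrev : (z.drop r).reverse = z.drop r := by
    have h4 := congrArg (List.take p) hpalzk
    rw [List.reverse_append, pw_reverse] at h4
    rw [take_pw_append z τ hk₁ (by omega)] at h4
    rw [List.take_of_length_le (show z.length ≤ p by omega)] at h4
    rw [List.take_append] at h4
    rw [List.take_of_length_le (show τ.reverse.length ≤ p by
      rw [List.length_reverse, hτlen]; omega)] at h4
    rw [show p - τ.reverse.length = p - r by rw [List.length_reverse, hτlen]] at h4
    rw [hτrev] at h4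
    -- h4 : τ ++ (pw z.reverse (n₁/p)).take (p - r) = z
    have h5 : (pw z.reverse (n₁ / p)).take (p - r) = z.reverse.take (p - r) := by
      have h5' := take_pw_append z.reverse (([] : List α)) hk₁
        (show p - r ≤ z.reverse.length by simp [hzlen])
      rw [List.append_nil] at h5'
      exact h5'
    rw [h5] at h4
    have h6 : z = τ ++ z.drop r := by
      conv_lhs => rw [← List.take_append_drop r z]
      congr 1
      rw [hzdef, pre_take f hrp.le]
    have h7 : τ ++ z.reverse.take (p - r) = τ ++ z.drop r := h4.trans h6
    rw [List.reverse_drop, hzlen]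
    exact (List.append_cancel_left h7).symm ▸ rfl
  set δ := z.drop r with hδdef
  have hzsplit : z = τ ++ δ := by
    conv_lhs => rw [← List.take_append_drop r z]
    rw [← hδdef]
    congr 1
    rw [hzdef, pre_take f hrp.le]
  have hzrev : z.reverse = δ ++ τ := by
    rw [hzsplit, List.reverse_append, hτrev, hδrev]
  have hpwτ : ∀ k, (pw z k ++ τ).reverse = pw z k ++ τ := by
    intro k
    induction k with
    | zero => simpa [pw] using hτrev
    | succ k ih =>
      rw [pw_succ, List.append_assoc, List.reverse_append, ih, hzrev]
      calc (pw z k ++ τ) ++ (δ ++ τ) = pw z k ++ ((τ ++ δ) ++ τ) := by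
            simp [List.append_assoc]
      _ = pw z k ++ (z ++ τ) := by rw [← hzsplit]
      _ = (pw z k ++ z) ++ τ := by simp [List.append_assoc]
      _ = z ++ pw z k ++ τ := by rw [pw_append_self]
      _ = z ++ (pw z k ++ τ) := by simp [List.append_assoc]
  have hcomm : ∀ k, τ ++ pw z.reverse k = pw z k ++ τ := by
    intro k
    induction k with
    | zero => simp [pw]
    | succ k ih =>
      have hτz : τ ++ z.reverse = z ++ τ := by
        rw [hzrev, hzsplit]; simp [List.append_assoc]
      calc τ ++ pw z.reverse (k + 1)
          = (τ ++ z.reverse) ++ pw z.reverse k := by rw [pw_succ, List.append_assoc]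
      _ = (z ++ τ) ++ pw z.reverse k := by rw [hτz]
      _ = z ++ (τ ++ pw z.reverse k) := by rw [List.append_assoc]
      _ = z ++ (pw z k ++ τ) := by rw [ih]
      _ = pw z (k + 1) ++ τ := by rw [pw_succ, List.append_assoc]
  -- step 10 : lengths in L are ≡ 0 mod p
  have hLres : ∀ t ∈ L, x.length ≤ t.length → (t.length - x.length) % p = 0 := by
    intro t ht hxt
    set e' := t.length - x.length with he'def
    set e := e' % p with hedef
    by_contra he0
    have hepos : 0 < e := Nat.pos_of_ne_zero he0
    have help : e < p := by rw [hedef]; exact Nat.mod_lt _ hppos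
    obtain ⟨w, hw, hwlen⟩ := exists_big (t.length + 3 * p)
    set n := w.length - x.length with hndef2
    have hG := PF2 t ht w hw hxt (by omega)
    set j := e' / p with hjdef
    have hma : e + p * j = e' := by
      rw [hedef, hjdef]; exact Nat.mod_add_div e' p
    have hjle : p * j ≤ e' := by omega
    have hn3 : e' + 3 * p ≤ n := by omega
    have hshift : seg f e' n = seg f e (n - p * j) := by
      calc seg f e' n = seg f (e + p * j) ((n - p * j) + p * j) := by
            rw [hma]; congr 1; omega
      _ = seg f e (n - p * j) := seg_shift_mul f hfp j e (n - p * j)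
    set n₂ := n - p * j with hn₂def
    have hn₂large : e + 3 * p ≤ n₂ := by omega
    have hnr : n % p = r := hresid n (PF1 w hw (by omega)) (by omega)
    have hn₂r : n₂ % p = r := by
      have h8 : (n₂ + p * j) % p = n₂ % p := Nat.add_mul_mod_self_left n₂ p j
      have h9 : n₂ + p * j = n := by omega
      rw [h9] at h8
      omega
    set K := n₂ / p with hKdef
    have hKsum : p * K + r = n₂ := by
      rw [hKdef, ← hn₂r]; exact Nat.div_add_mod n₂ p
    have hK2 : 2 ≤ K := by
      by_contra hK
      have h10 : p * K ≤ p * 1 := Nat.mul_le_mul_left p (by omega)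
      omega
    have hsegsplit : seg f e n₂ = seg f e p ++ pre f (n₂ - p) := by
      rw [← seg_append f (show e ≤ p by omega) (show p ≤ n₂ by omega)]
      congr 1
      have h9 := seg_shift_mul f hfp 1 0 (n₂ - p)
      rw [seg_zero] at h9
      calc seg f p n₂ = seg f (0 + p * 1) ((n₂ - p) + p * 1) := by congr 1 <;> omega
      _ = pre f (n₂ - p) := h9
    set σ := seg f e p with hσdef
    set N := pre f (n₂ - p) with hNdef
    have hNform : N = pw z (K - 1) ++ τ := by
      have h10 : p * K = p * (K - 1) + p := by
        have h11 : K - 1 + 1 = K := by omega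
        calc p * K = p * ((K - 1) + 1) := by rw [h11]
        _ = p * (K - 1) + p := by ring
      have h12 : n₂ - p = p * (K - 1) + r := by omega
      rw [hNdef, h12, pre_mul_add f hfp, ← hzdef, ← hτdef]
    have hNpal : N.reverse = N := by rw [hNform]; exact hpwτ (K - 1)
    have hσlen : σ.length = p - e := seg_length f e p
    have hG2 : (σ ++ N).reverse = σ ++ N := by
      rw [← hsegsplit, ← hshift]
      exact hG
    have hσN : σ ++ N = N ++ σ.reverse := by
      have h12 := hG2
      rw [List.reverse_append, hNpal] at h12
      exact h12.symm
    have hNlen : p ≤ N.length := by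
      rw [hNdef, pre_length]; omega
    have h13 := congrArg (List.take p) hσN
    have hLHS : (σ ++ N).take p = σ ++ pre f e := by
      rw [List.take_append, List.take_of_length_le (by omega)]
      have h14 : p - σ.length = e := by omega
      rw [h14, hNdef, pre_take f (by omega)]
    have hRHS : (N ++ σ.reverse).take p = z := by
      rw [take_app hNlen, hNform, take_pw_append z τ (by omega) (by omega)]
      rw [List.take_of_length_le (by omega : z.length ≤ p)]
    have hσν : σ ++ pre f e = z := by rw [← hLHS, h13, hRHS]
    have hνσ : pre f e ++ σ = z := by
      rw [hσdef, hzdef, pre_append_seg f (show e ≤ p by omega)]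
    have hσpre : σ = pre f (p - e) := by
      have h15 := congrArg (List.take (p - e)) hσν
      rw [take_app (by omega), List.take_of_length_le (by omega)] at h15
      rw [h15, hzdef, pre_take f (by omega)]
    have h2p : seg f e (2 * p) = pre f (2 * p - e) := by
      have hA : seg f e (2 * p) = σ ++ z := by
        have hBB : seg f p (2 * p) = z := by
          have h9 := seg_shift_mul f hfp 1 0 p
          rw [seg_zero] at h9
          calc seg f p (2 * p) = seg f (0 + p * 1) (p + p * 1) := by congr 1 <;> omega
          _ = pre f p := h9
          _ = z := by rw [hzdef]
        rw [← seg_append f (show e ≤ p by omega) (show p ≤ 2 * p by omega), hBB, hσdef]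
      calc seg f e (2 * p) = σ ++ z := hA
      _ = σ ++ (pre f e ++ σ) := by rw [hνσ]
      _ = (σ ++ pre f e) ++ σ := by rw [List.append_assoc]
      _ = z ++ σ := by rw [hσν]
      _ = pre f p ++ pre f (p - e) := by rw [← hzdef, hσpre]
      _ = pre f (p + (p - e)) := (pre_shift f hfp _).symm
      _ = pre f (2 * p - e) := by congr 1; omega
    have hpt : ∀ i, i + e < 2 * p → f (i + e) = f i := by
      intro i hi
      have h16 := h2p
      rw [seg, pre] at h16
      have h17 := List.map_eq_map_iff.1 h16 i (List.mem_range.2 (by omega))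
      rw [Nat.add_comm i e]
      exact h17
    have hPde : Pd f e := pd_of_prefix_period f hfp hppos hpt (by omega)
    exact absurd (hminp e hepos hPde) (by omega)
  -- step 11 : final structure
  have hLstruct : ∀ t ∈ L, x.length ≤ t.length →
      t = x ++ pw z ((t.length - x.length) / p) := by
    intro t ht hxt
    have h0 := hLres t ht hxt
    have hsum : p * ((t.length - x.length) / p) + 0 = t.length - x.length := by
      have := Nat.div_add_mod (t.length - x.length) p; omega
    calc t = Pre t.length := F1 t ht
    _ = x ++ pre f (t.length - x.length) := by
      simp only [hPre]; rw [List.take_of_length_le hxt]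
    _ = x ++ pw z ((t.length - x.length) / p) := by
      conv_lhs => rw [← hsum]
      rw [pre_mul_add f hfp, ← hzdef]
      simp [pre]
  have hRstruct : ∀ w ∈ R, x.length + p ≤ w.length →
      ∃ k, 1 ≤ k ∧ w = τ ++ (pw z.reverse k ++ x.reverse) := by
    intro w hw hwp
    set n := w.length - x.length with hndef3
    have hnp : p ≤ n := by omega
    have hnr : n % p = r := hresid n (PF1 w hw (by omega)) hnp
    refine ⟨n / p, (Nat.one_le_div_iff hppos).2 hnp, ?_⟩
    have hsum : p * (n / p) + r = n := by
      have := Nat.div_add_mod n p; omega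
    have hw2 : w.reverse = x ++ (pw z (n / p) ++ τ) := by
      calc w.reverse = Pre w.length := F2 w hw
      _ = x ++ pre f n := by simp only [hPre]; rw [List.take_of_length_le (by omega)]
      _ = x ++ (pw z (n / p) ++ τ) := by
        conv_lhs => rw [← hsum]
        rw [pre_mul_add f hfp, ← hzdef, ← hτdef]
    calc w = w.reverse.reverse := (List.reverse_reverse w).symm
    _ = (x ++ (pw z (n / p) ++ τ)).reverse := by rw [hw2]
    _ = τ ++ (pw z.reverse (n / p) ++ x.reverse) := by
      simp [List.reverse_append, pw_reverse, hτrev, List.append_assoc]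
  -- step 12 : the cover
  set q1 : Fin 4 → List α := quad x z z (z ++ (τ ++ x.reverse)) with hq1
  set Q : List (Fin 4 → List α) :=
    q1 :: (((List.range (x.length + p)).map fun c => quad x z z (Pre c).reverse) ++
      ((List.range x.length).map fun c =>
        quad (x.take c ++ τ) z.reverse z.reverse x.reverse) ++
      (((List.range x.length).product (List.range (x.length + p))).map
        fun c => quad (x.take c.1 ++ (Pre c.2).reverse) z z [])) with hQ
  refine ⟨Q.length, fun j => Q.get j, ?_⟩
  intro s hs
  obtain ⟨t, ht, w, hw, hs'⟩ := Language.mem_mul.1 hs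
  have key : ∃ q ∈ Q, s ∈ quadLang q := by
    subst hs'
    rcases le_or_gt x.length t.length with h1 | h1 <;>
      rcases le_or_gt (x.length + p) w.length with h2 | h2
    · -- long t, long w
      obtain ⟨k, hk1, hkw⟩ := hRstruct w hw h2
      obtain ⟨jj, hjt⟩ : ∃ m, t = x ++ pw z m := ⟨_, hLstruct t ht h1⟩
      refine ⟨q1, by rw [hQ]; exact List.mem_cons_self, ?_⟩
      have heq : t ++ w = x ++ (pw z (jj + k - 1) ++ (pw z 0 ++ (z ++ (τ ++ x.reverse)))) := by
        rw [hjt, hkw]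
        calc (x ++ pw z jj) ++ (τ ++ (pw z.reverse k ++ x.reverse))
            = x ++ (pw z jj ++ ((τ ++ pw z.reverse k) ++ x.reverse)) := by
              simp [List.append_assoc]
        _ = x ++ (pw z jj ++ ((pw z k ++ τ) ++ x.reverse)) := by rw [hcomm k]
        _ = x ++ ((pw z jj ++ pw z k) ++ (τ ++ x.reverse)) := by simp [List.append_assoc]
        _ = x ++ (pw z (jj + k) ++ (τ ++ x.reverse)) := by rw [← pw_add]
        _ = x ++ ((pw z (jj + k - 1) ++ z) ++ (τ ++ x.reverse)) := by
            have hk' : jj + k = (jj + k - 1) + 1 := by omega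
            conv_lhs => rw [hk']
            rw [pw_succ']
        _ = x ++ (pw z (jj + k - 1) ++ (pw z 0 ++ (z ++ (τ ++ x.reverse)))) := by
            simp [pw, List.append_assoc]
      rw [heq, hq1]
      exact mem_quadLang x z z (z ++ (τ ++ x.reverse)) (jj + k - 1) 0
    · -- long t, short w
      obtain ⟨jj, hjt⟩ : ∃ m, t = x ++ pw z m := ⟨_, hLstruct t ht h1⟩
      have hwshort : w = (Pre w.length).reverse := by
        rw [← F2 w hw, List.reverse_reverse]
      refine ⟨quad x z z (Pre w.length).reverse, ?_, ?_⟩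
      · rw [hQ]
        refine List.mem_cons_of_mem _ ?_
        refine List.mem_append_left _ (List.mem_append_left _ ?_)
        exact List.mem_map.2 ⟨w.length, List.mem_range.2 h2, rfl⟩
      · have heq : t ++ w = x ++ (pw z jj ++ (pw z 0 ++ (Pre w.length).reverse)) := by
          conv_lhs => rw [hjt, hwshort]
          simp [pw, List.append_assoc]
        rw [heq]
        exact mem_quadLang x z z (Pre w.length).reverse jj 0
    · -- short t, long w
      obtain ⟨k, hk1, hkw⟩ := hRstruct w hw h2
      have hts : t = x.take t.length := by
        calc t = Pre t.length := F1 t ht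
        _ = x.take t.length := by
          simp only [hPre]
          rw [show t.length - x.length = 0 by omega]
          simp [pre]
      refine ⟨quad (x.take t.length ++ τ) z.reverse z.reverse x.reverse, ?_, ?_⟩
      · rw [hQ]
        refine List.mem_cons_of_mem _ ?_
        refine List.mem_append_left _ (List.mem_append_right _ ?_)
        exact List.mem_map.2 ⟨t.length, List.mem_range.2 h1, rfl⟩
      · have heq : t ++ w = (x.take t.length ++ τ) ++
            (pw z.reverse k ++ (pw z.reverse 0 ++ x.reverse)) := by
          conv_lhs => rw [hts, hkw]
          simp [pw, List.append_assoc]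
        rw [heq]
        exact mem_quadLang (x.take t.length ++ τ) z.reverse z.reverse x.reverse k 0
    · -- short t, short w
      have hts : t = x.take t.length := by
        calc t = Pre t.length := F1 t ht
        _ = x.take t.length := by
          simp only [hPre]
          rw [show t.length - x.length = 0 by omega]
          simp [pre]
      have hwshort : w = (Pre w.length).reverse := by
        rw [← F2 w hw, List.reverse_reverse]
      refine ⟨quad (x.take t.length ++ (Pre w.length).reverse) z z [], ?_, ?_⟩
      · rw [hQ]
        refine List.mem_cons_of_mem _ ?_
        refine List.mem_append_right _ ?_
        refine List.mem_map.2 ⟨(t.length, w.length), ?_, rfl⟩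
        exact List.pair_mem_product.2 ⟨List.mem_range.2 h1, List.mem_range.2 h2⟩
      · have heq : t ++ w = (x.take t.length ++ (Pre w.length).reverse) ++
            (pw z 0 ++ (pw z 0 ++ [])) := by
          conv_lhs => rw [hts, hwshort]
          simp [pw, List.append_assoc]
        rw [heq]
        exact mem_quadLang (x.take t.length ++ (Pre w.length).reverse) z z [] 0 0
  obtain ⟨q, hqQ, hqm⟩ := key
  obtain ⟨idx, hidx⟩ := List.mem_iff_get.1 hqQ
  refine Set.mem_iUnion.2 ⟨idx, ?_⟩
  show s ∈ quadLang (Q.get idx)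
  rw [hidx]
  exact hqm

end Stmt3Aux


/-- If `L * R ⊆ Palindromes`, `L` has at least two distinct words and `R` is
infinite, then `L * R` is covered by a finite union of languages of the form
`{u₀} ({u₁})^* ({u₂})^* {u₃}`. -/
theorem stmt_3 {α : Type*} (L R : Language α)
    (hsub : L * R ≤ Palindromes)
    (hL : ∃ u ∈ L, ∃ v ∈ L, u ≠ v)
    (hR : Set.Infinite (R : Set (List α))) :
    ∃ (k : ℕ) (u : Fin k → Fin 4 → List α),
      L * R ≤ ⨆ j : Fin k,
        ({u j 0} : Language α) * KStar.kstar ({u j 1} : Language α) *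
          KStar.kstar ({u j 2} : Language α) * ({u j 3} : Language α) := by
  obtain ⟨u, hu, v, hv, huv⟩ := hL
  have hpal : ∀ t ∈ L, ∀ w ∈ R, (t ++ w).reverse = t ++ w := fun t ht w hw =>
    hsub (Language.mem_mul.2 ⟨t, ht, w, hw, rfl⟩)
  rcases Nat.lt_trichotomy u.length v.length with h | h | h
  · exact Stmt3Aux.main L R hsub hR hu hv h
  · exfalso
    have hdetshort : ∀ w ∈ R, w.length ≤ v.length → w = (v.take w.length).reverse := by
      intro w hw hle
      have hh := Stmt3Aux.rev_take_of_pal (hpal v hv w hw) hle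
      rw [← hh, List.reverse_reverse]
    by_cases hbig : ∃ w ∈ R, v.length < w.length
    · obtain ⟨w₀, hw₀, hlen⟩ := hbig
      have h1 : u = w₀.reverse.take u.length :=
        Stmt3Aux.take_of_pal (hpal u hu w₀ hw₀) (by omega)
      have h2 : v = w₀.reverse.take v.length :=
        Stmt3Aux.take_of_pal (hpal v hv w₀ hw₀) (by omega)
      apply huv
      rw [h1, h2, h]
    · push_neg at hbig
      apply hR
      apply Set.Finite.subset
        ((Set.finite_Iio (v.length + 1)).image (fun n => (v.take n).reverse))
      intro w hw
      exact ⟨w.length, Nat.lt_succ_of_le (hbig w hw), by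
        show (v.take w.length).reverse = w
        exact (hdetshort w hw (hbig w hw)).symm⟩
  · exact Stmt3Aux.main L R hsub hR hv hu h
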